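/- If a (2k+1)-regular graph G contains a perfect matching, then for every k' ≤ k, G contains a spanning 2k'-regular subgraph. -/

import Mathlib

set_option linter.unusedSectionVars false
set_option maxHeartbeats 1000000
open Finset
namespace Stmt17
variable {V : Type*} [Fintype V] [DecidableEq V]

def outd (E : Finset (V × V)) (v : V) : ℕ := #(E.filter fun e => e.1 = v)
def ind (E : Finset (V × V)) (v : V) : ℕ := #(E.filter fun e => e.2 = v)

lemma outd_eq (E : Finset (V × V)) (v : V) :
    outd E v = #(univ.filter fun u => (v, u) ∈ E) := by
  apply Finset.card_nbij' (fun e => e.2) (fun u => (v, u))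
  · intro e he
    simp only [mem_coe, mem_filter, mem_univ, true_and] at he ⊢
    have : (e.1, e.2) = (v, e.2) := by rw [he.2]
    rw [← this]; exact he.1
  · intro u hu
    simp only [mem_coe, mem_filter, mem_univ, true_and] at hu ⊢
    exact ⟨hu, trivial⟩
  · intro e he
    simp only [mem_coe, mem_filter] at he
    exact Prod.ext he.2.symm rfl
  · intro u hu; rfl

lemma ind_eq (E : Finset (V × V)) (v : V) :
    ind E v = #(univ.filter fun u => (u, v) ∈ E) := by
  apply Finset.card_nbij' (fun e => e.1) (fun u => (u, v))
  · intro e he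
    simp only [mem_coe, mem_filter, mem_univ, true_and] at he ⊢
    have : (e.1, e.2) = (e.1, v) := by rw [he.2]
    rw [← this]; exact he.1
  · intro u hu
    simp only [mem_coe, mem_filter, mem_univ, true_and] at hu ⊢
    exact ⟨hu, trivial⟩
  · intro e he
    simp only [mem_coe, mem_filter] at he
    exact Prod.ext rfl he.2.symm
  · intro u hu; rfl

lemma mem_swap_image {C : Finset (V × V)} {x y : V} :
    (x, y) ∈ C.image Prod.swap ↔ (y, x) ∈ C := by
  constructor
  · rintro h
    obtain ⟨⟨p, q⟩, hp, he⟩ := Finset.mem_image.mp h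
    simp only [Prod.swap_prod_mk, Prod.mk.injEq] at he
    rwa [← he.1, ← he.2]
  · intro h; exact Finset.mem_image.mpr ⟨(y, x), h, rfl⟩

lemma outd_swap (C : Finset (V × V)) (v : V) : outd (C.image Prod.swap) v = ind C v := by
  rw [outd_eq, ind_eq]
  congr 1
  ext u
  simp only [mem_filter, mem_univ, true_and, mem_swap_image]

lemma outd_union {A B : Finset (V × V)} (h : Disjoint A B) (v : V) :
    outd (A ∪ B) v = outd A v + outd B v := by
  unfold outd
  rw [Finset.filter_union, Finset.card_union_of_disjoint (Finset.disjoint_filter_filter h)]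

lemma ind_union {A B : Finset (V × V)} (h : Disjoint A B) (v : V) :
    ind (A ∪ B) v = ind A v + ind B v := by
  unfold ind
  rw [Finset.filter_union, Finset.card_union_of_disjoint (Finset.disjoint_filter_filter h)]


def graphOf (F : Finset (V × V)) (hs : ∀ {x y : V}, (x,y) ∈ F → (y,x) ∈ F)
    (hi : ∀ x : V, (x,x) ∉ F) : SimpleGraph V :=
  ⟨fun x y => (x,y) ∈ F, ⟨fun x y h => hs h⟩, ⟨fun x h => hi x h⟩⟩

instance graphOf.instDec (F : Finset (V × V)) (hs : ∀ {x y : V}, (x,y) ∈ F → (y,x) ∈ F)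
    (hi : ∀ x : V, (x,x) ∉ F) : DecidableRel (graphOf F hs hi).Adj :=
  fun x y => inferInstanceAs (Decidable ((x,y) ∈ F))

lemma degree_graphOf (F : Finset (V × V)) (hs : ∀ {x y : V}, (x,y) ∈ F → (y,x) ∈ F)
    (hi : ∀ x : V, (x,x) ∉ F) (v : V) : (graphOf F hs hi).degree v = outd F v := by
  rw [SimpleGraph.degree, SimpleGraph.neighborFinset_eq_filter, outd_eq]
  congr 1

lemma exists_cycleFinset (E : Finset (V × V)) (hs : ∀ {x y : V}, (x,y) ∈ E → (y,x) ∈ E)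
    (hirr : ∀ x : V, (x,x) ∉ E) (hev : ∀ v, Even (outd E v)) (hne : E.Nonempty) :
    ∃ C : Finset (V × V), C ⊆ E ∧ C.Nonempty ∧ (∀ x y : V, (x,y) ∈ C → (y,x) ∉ C) ∧
      ∀ v, outd C v = ind C v := by
  classical
  obtain ⟨⟨a,b⟩, hab⟩ := hne
  have hne' : a ≠ b := fun h => hirr a (h ▸ hab)
  set G := graphOf E hs hirr with hG
  have hGadj : ∀ x y, G.Adj x y ↔ (x,y) ∈ E := fun _ _ => Iff.rfl
  set G' := G \ SimpleGraph.fromEdgeSet {s(a,b)} with hG'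
  have hG'adj : ∀ x y, G'.Adj x y ↔ (x,y) ∈ E ∧ ¬(x = a ∧ y = b) ∧ ¬(x = b ∧ y = a) := by
    intro x y
    rw [hG', SimpleGraph.sdiff_adj, SimpleGraph.fromEdgeSet_adj]
    constructor
    · rintro ⟨h1, h2⟩
      have hxy : x ≠ y := fun h => hirr x (h ▸ h1)
      refine ⟨h1, ?_, ?_⟩ <;> rintro ⟨rfl, rfl⟩ <;>
        exact h2 ⟨by simp [Sym2.eq_iff], hxy⟩
    · rintro ⟨h1, h2, h3⟩
      refine ⟨h1, ?_⟩
      rintro ⟨hm, -⟩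
      rw [Set.mem_singleton_iff, Sym2.eq_iff] at hm
      rcases hm with ⟨rfl, rfl⟩ | ⟨rfl, rfl⟩
      · exact h2 ⟨rfl, rfl⟩
      · exact h3 ⟨rfl, rfl⟩
  have hreach : G'.Reachable a b := by
    by_contra hnr
    set E'' := univ.filter (fun e : V × V => G'.Adj e.1 e.2 ∧ G'.Reachable a e.1) with hE''
    have hmem'' : ∀ x y : V, (x,y) ∈ E'' ↔ G'.Adj x y ∧ G'.Reachable a x := by
      intro x y; simp [hE'']
    have hs'' : ∀ {x y : V}, (x,y) ∈ E'' → (y,x) ∈ E'' := by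
      intro x y h
      rw [hmem''] at h ⊢
      exact ⟨h.1.symm, h.2.trans h.1.reachable⟩
    have hi'' : ∀ x : V, (x,x) ∉ E'' := by
      intro x h
      rw [hmem''] at h
      exact G'.loopless.irrefl x h.1
    -- degrees of the double-deleted graph
    have houtd : ∀ v : V, G'.Reachable a v →
        outd E'' v = #(univ.filter fun u => G'.Adj v u) := by
      intro v hv
      rw [outd_eq]
      congr 1
      ext u
      simp only [mem_filter, mem_univ, true_and, hmem'']
      exact ⟨fun h => h.1, fun h => ⟨h, hv⟩⟩
    have houtd0 : ∀ v : V, ¬ G'.Reachable a v → outd E'' v = 0 := by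
      intro v hv
      rw [outd_eq, Finset.card_eq_zero]
      ext u
      simp only [mem_filter, mem_univ, true_and, hmem'', Finset.notMem_empty, iff_false]
      rintro ⟨-, h⟩
      exact hv h
    have hEout : ∀ v : V, outd E v = #(univ.filter fun u => (v, u) ∈ E) := fun v => outd_eq E v
    have hnb : ∀ v : V, v ≠ a → v ≠ b → #(univ.filter fun u => G'.Adj v u) = outd E v := by
      intro v hva hvb
      rw [outd_eq]
      congr 1
      ext u
      simp only [mem_filter, mem_univ, true_and, hG'adj]
      constructor
      · exact fun h => h.1
      · intro h
        exact ⟨h, fun hh => hva hh.1, fun hh => hvb hh.1⟩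
    have hdega : #(univ.filter fun u => G'.Adj a u) + 1 = outd E a := by
      rw [outd_eq]
      have hset : (univ.filter fun u => G'.Adj a u) = (univ.filter fun u => (a, u) ∈ E).erase b := by
        ext u
        simp only [mem_filter, mem_univ, true_and, hG'adj, Finset.mem_erase]
        constructor
        · intro h
          tauto
        · intro h
          tauto
      rw [hset]
      exact Finset.card_erase_add_one (by simp only [mem_filter, mem_univ, true_and]; exact hab)
    have hodd_set : (univ.filter fun v => Odd ((graphOf E'' hs'' hi'').degree v)) = {a} := by
      ext v
      simp only [mem_filter, mem_univ, true_and, Finset.mem_singleton, degree_graphOf]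
      constructor
      · intro hodd
        by_contra hva
        rcases Classical.em (G'.Reachable a v) with hr | hr
        · have hvb : v ≠ b := by rintro rfl; exact hnr hr
          rw [houtd v hr, hnb v hva hvb] at hodd
          exact (Nat.not_odd_iff_even.mpr (hev v)) hodd
        · rw [houtd0 v hr] at hodd
          simp at hodd
      · intro hv
        rw [hv, houtd a (SimpleGraph.Reachable.refl a)]
        have h1 := hdega
        have h2 := hev a
        rw [Nat.even_iff] at h2
        rw [Nat.odd_iff]
        omega
    have hhand := SimpleGraph.even_card_odd_degree_vertices (graphOf E'' hs'' hi'')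
    rw [hodd_set] at hhand
    simp at hhand
  obtain ⟨u, c, hc, -⟩ := SimpleGraph.adj_and_reachable_delete_edges_iff_exists_cycle.mp ⟨hab, hreach⟩
  -- extract the cycle finset
  set l := c.darts.map SimpleGraph.Dart.toProd with hl
  have hnodupE : c.edges.Nodup := hc.isCircuit.isTrail.edges_nodup
  have hedges : c.edges = c.darts.map SimpleGraph.Dart.edge := rfl
  have hdnodup : c.darts.Nodup := List.Nodup.of_map _ (hedges ▸ hnodupE)
  have hlnodup : l.Nodup := hdnodup.map SimpleGraph.Dart.toProd_injective
  have hlen : l.length = c.length := by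
    rw [hl, List.length_map, SimpleGraph.Walk.length_darts]
  have h3 := hc.three_le_length
  refine ⟨l.toFinset, ?_, ?_, ?_, ?_⟩
  · intro e he
    rw [List.mem_toFinset] at he
    obtain ⟨d, hd, rfl⟩ := List.mem_map.mp he
    exact d.adj
  · have hlne : l ≠ [] := by
      intro h
      rw [h] at hlen
      simp at hlen
      omega
    exact ⟨l.head hlne, List.mem_toFinset.mpr (List.head_mem hlne)⟩
  · intro x y hxy hyx
    rw [List.mem_toFinset] at hxy hyx
    obtain ⟨d1, hd1, he1⟩ := List.mem_map.mp hxy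
    obtain ⟨d2, hd2, he2⟩ := List.mem_map.mp hyx
    have hxyne : x ≠ y := fun h => (he1 ▸ d1.adj).ne (by rw [h])
    have hedge : d1.edge = d2.edge := by
      have e1 : d1.edge = s(x, y) := by
        show s(d1.toProd.1, d1.toProd.2) = _
        rw [he1]
      have e2 : d2.edge = s(y, x) := by
        show s(d2.toProd.1, d2.toProd.2) = _
        rw [he2]
      rw [e1, e2, Sym2.eq_swap]
    have : d1 = d2 := by
      have hinj := List.inj_on_of_nodup_map (hedges ▸ hnodupE)
      exact hinj hd1 hd2 hedge
    rw [this, he2] at he1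
    simp only [Prod.mk.injEq] at he1
    exact hxyne he1.2
  · intro v
    have hcard : ∀ (p : V × V → Prop) [DecidablePred p],
        #(l.toFinset.filter p) = (l.filter (fun e => p e)).length := by
      intro p hp
      have h1 : Finset.filter p l.toFinset = (l.filter (fun a => p a)).toFinset := by
        ext x; simp [List.mem_filter, decide_eq_true_iff]
      rw [h1, List.toFinset_card_of_nodup (hlnodup.filter _)]
    unfold outd ind
    rw [hcard, hcard]
    have hfst : l.map Prod.fst = c.support.dropLast := by
      rw [hl, List.map_map]
      exact SimpleGraph.Walk.map_fst_darts c
    have hsnd : l.map Prod.snd = c.support.tail := by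
      rw [hl, List.map_map]
      exact SimpleGraph.Walk.map_snd_darts c
    have hflen : ∀ (f : V × V → V) (m : List V) (l' : List (V × V)), l'.map f = m →
        (l'.filter (fun e => f e = v)).length = (m.filter (fun x => x = v)).length := by
      rintro f m l' rfl
      rw [List.filter_map, List.length_map]
      rfl
    rw [hflen Prod.fst _ l hfst, hflen Prod.snd _ l hsnd]
    -- now a permutation argument on the support
    have hse : c.support = u :: c.support.tail := c.support_eq_cons
    have htne : c.support.tail ≠ [] := by
      intro h
      have h5 := congrArg List.length hsnd
      rw [h] at h5
      simp only [List.length_map, List.length_nil] at h5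
      omega
    have hlast : c.support.tail.getLast htne = u := by
      rw [List.getLast_tail]
      exact c.getLast_support
    have key : ∀ (t : List V) (h : t ≠ []), t.getLast h = u → List.Perm (u :: t).dropLast t := by
      intro t h hu
      conv_rhs => rw [← List.dropLast_append_getLast h, hu]
      conv_lhs => rw [← List.dropLast_append_getLast h, hu]
      rw [show u :: (t.dropLast ++ [u]) = (u :: t.dropLast) ++ [u] from rfl]
      rw [List.dropLast_concat]
      exact (List.perm_append_singleton _ _).symm
    have hperm : List.Perm c.support.dropLast c.support.tail := by
      conv_lhs => rw [hse]
      exact key _ htne hlast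
    exact (hperm.filter _).length_eq


lemma ind_swap (C : Finset (V × V)) (v : V) : ind (C.image Prod.swap) v = outd C v := by
  rw [ind_eq, outd_eq]
  congr 1
  ext u
  simp only [mem_filter, mem_univ, true_and, mem_swap_image]

lemma orient : ∀ (n : ℕ) (E : Finset (V × V)), E.card ≤ n →
    (∀ {x y : V}, (x,y) ∈ E → (y,x) ∈ E) → (∀ x : V, (x,x) ∉ E) → (∀ v, Even (outd E v)) →
    ∃ D : Finset (V × V), D ⊆ E ∧ (∀ x y : V, ((x,y) ∈ E ↔ (x,y) ∈ D ∨ (y,x) ∈ D)) ∧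
      (∀ x y : V, (x,y) ∈ D → (y,x) ∉ D) ∧ (∀ v, outd D v = ind D v) := by
  intro n
  induction n with
  | zero =>
    intro E hcard _ _ _
    have : E = ∅ := Finset.card_eq_zero.mp (Nat.le_zero.mp hcard)
    subst this
    exact ⟨∅, by simp, by simp, by simp, by simp [outd, ind]⟩
  | succ n IH =>
    intro E hcard hs hirr hev
    rcases Finset.eq_empty_or_nonempty E with rfl | hne
    · exact ⟨∅, by simp, by simp, by simp, by simp [outd, ind]⟩
    obtain ⟨C, hCE, hCne, hCanti, hCbal⟩ := exists_cycleFinset E hs hirr hev hne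
    set R := C ∪ C.image Prod.swap with hR
    have hRE : R ⊆ E := by
      intro e he
      rcases Finset.mem_union.mp he with h | h
      · exact hCE h
      · obtain ⟨⟨p,q⟩, hp, rfl⟩ := Finset.mem_image.mp h
        exact hs (hCE hp)
    set E' := E \ R with hE'
    have hdisj : Disjoint C (C.image Prod.swap) := by
      rw [Finset.disjoint_left]
      rintro ⟨x,y⟩ h1 h2
      exact hCanti x y h1 (mem_swap_image.mp h2)
    have houtR : ∀ v, outd R v = outd C v + ind C v := by
      intro v
      rw [hR, outd_union hdisj, outd_swap]
    have hindR : ∀ v, ind R v = ind C v + outd C v := by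
      intro v
      rw [hR, ind_union hdisj, ind_swap]
    have hdisjE' : Disjoint E' R := Finset.sdiff_disjoint
    have hpart : E' ∪ R = E := Finset.sdiff_union_of_subset hRE
    have houtE : ∀ v, outd E v = outd E' v + 2 * outd C v := by
      intro v
      have hb := hCbal v
      rw [← hpart, outd_union hdisjE', houtR]
      omega
    have hev' : ∀ v, Even (outd E' v) := by
      intro v
      obtain ⟨t, ht⟩ := hev v
      have h := houtE v
      exact ⟨t - outd C v, by omega⟩
    have hcard' : E'.card ≤ n := by
      obtain ⟨c0, hc0⟩ := hCne
      have hssub : E' ⊂ E := by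
        refine (Finset.ssubset_iff_of_subset Finset.sdiff_subset).mpr ?_
        exact ⟨c0, hCE hc0, fun hmem =>
          (Finset.mem_sdiff.mp hmem).2 (Finset.mem_union.mpr (Or.inl hc0))⟩
      have := Finset.card_lt_card hssub
      omega
    have hRsym : ∀ x y : V, (x,y) ∈ R ↔ (y,x) ∈ R := by
      intro x y
      simp only [hR, Finset.mem_union, mem_swap_image]
      tauto
    have hs' : ∀ {x y : V}, (x,y) ∈ E' → (y,x) ∈ E' := by
      intro x y h
      rw [hE', Finset.mem_sdiff] at h ⊢
      exact ⟨hs h.1, fun hr => h.2 ((hRsym x y).mpr hr)⟩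
    have hirr' : ∀ x : V, (x,x) ∉ E' := fun x h => hirr x (Finset.mem_sdiff.mp h).1
    obtain ⟨D', hD'E', hcover', hanti', hbal'⟩ := IH E' hcard' hs' hirr' hev'
    refine ⟨D' ∪ C, ?_, ?_, ?_, ?_⟩
    · intro e he
      rcases Finset.mem_union.mp he with h | h
      · exact Finset.sdiff_subset (hD'E' h)
      · exact hCE h
    · intro x y
      have h1 : (x,y) ∈ E ↔ (x,y) ∈ E' ∨ (x,y) ∈ R := by
        rw [← hpart, Finset.mem_union]
      have h2 := hcover' x y
      have h3 : (x,y) ∈ R ↔ (x,y) ∈ C ∨ (y,x) ∈ C := by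
        simp only [hR, Finset.mem_union, mem_swap_image]
      have h4 : (y,x) ∈ E' ↔ (y,x) ∈ D' ∨ (x,y) ∈ D' := hcover' y x
      simp only [Finset.mem_union]
      rw [h1, h2, h3]
      tauto
    · rintro x y hxy hyx
      rcases Finset.mem_union.mp hxy with h1 | h1 <;> rcases Finset.mem_union.mp hyx with h2 | h2
      · exact hanti' x y h1 h2
      · have hr : (x,y) ∈ R := (hRsym x y).mpr (Finset.mem_union.mpr (Or.inl h2))
        exact (Finset.mem_sdiff.mp (hD'E' h1)).2 hr
      · have hr : (y,x) ∈ R := (hRsym y x).mpr (Finset.mem_union.mpr (Or.inl h1))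
        exact (Finset.mem_sdiff.mp (hD'E' h2)).2 hr
      · exact hCanti x y h1 h2
    · intro v
      have hdisjDC : Disjoint D' C := by
        rw [Finset.disjoint_left]
        intro e he hec
        exact (Finset.mem_sdiff.mp (hD'E' he)).2 (Finset.mem_union.mpr (Or.inl hec))
      rw [outd_union hdisjDC, ind_union hdisjDC, hbal' v, hCbal v]


lemma filter_sdiff_eq (D S : Finset (V × V)) (p : V × V → Prop) [DecidablePred p] :
    (D \ S).filter p = D.filter p \ S.filter p := by
  ext e
  simp only [Finset.mem_filter, Finset.mem_sdiff]
  tauto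

lemma reduce (m : ℕ) (D : Finset (V × V)) (ho : ∀ v, outd D v = m + 1)
    (hi : ∀ v, ind D v = m + 1) :
    ∃ D' : Finset (V × V), D' ⊆ D ∧ (∀ v, outd D' v = m) ∧ (∀ v, ind D' v = m) := by
  classical
  set t : V → Finset V := fun v => (D.filter fun e => e.1 = v).image Prod.snd with ht
  have htmem : ∀ v u : V, u ∈ t v ↔ (v, u) ∈ D := by
    intro v u
    constructor
    · intro h
      obtain ⟨e, he, hu⟩ := Finset.mem_image.mp h
      obtain ⟨heD, he1⟩ := Finset.mem_filter.mp he
      have he2 : e = (v, u) := Prod.ext he1 hu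
      rwa [he2] at heD
    · intro h
      exact Finset.mem_image.mpr ⟨(v,u), Finset.mem_filter.mpr ⟨h, rfl⟩, rfl⟩
  -- Hall condition
  have hall : ∀ s : Finset V, #s ≤ #(s.biUnion t) := by
    intro s
    set B := s.biUnion t with hB
    have hcount1 : #(D.filter fun e => e.1 ∈ s) = (m+1) * #s := by
      rw [Finset.card_eq_sum_card_fiberwise (s := D.filter fun e => e.1 ∈ s) (f := fun e : V × V => e.1) (t := s)
        (fun e he => (Finset.mem_filter.mp he).2)]
      rw [Finset.sum_congr rfl (g := fun _ => m + 1) ?_, Finset.sum_const, smul_eq_mul, mul_comm]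
      intro v hv
      rw [Finset.filter_filter]
      have hff : (D.filter fun e => e.1 ∈ s ∧ e.1 = v) = D.filter fun e => e.1 = v := by
        ext e
        simp only [Finset.mem_filter]
        constructor
        · rintro ⟨h1, -, h2⟩
          exact ⟨h1, h2⟩
        · rintro ⟨h1, h2⟩
          exact ⟨h1, h2 ▸ hv, h2⟩
      rw [hff]
      exact ho v
    have hsub : (D.filter fun e => e.1 ∈ s) ⊆ (D.filter fun e => e.2 ∈ B) := by
      rintro ⟨p, q⟩ he
      obtain ⟨heD, hes⟩ := Finset.mem_filter.mp he
      refine Finset.mem_filter.mpr ⟨heD, ?_⟩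
      exact Finset.mem_biUnion.mpr ⟨p, hes, (htmem p q).mpr heD⟩
    have hcount2 : #(D.filter fun e => e.2 ∈ B) = (m+1) * #B := by
      rw [Finset.card_eq_sum_card_fiberwise (s := D.filter fun e => e.2 ∈ B) (f := fun e : V × V => e.2) (t := B)
        (fun e he => (Finset.mem_filter.mp he).2)]
      rw [Finset.sum_congr rfl (g := fun _ => m + 1) ?_, Finset.sum_const, smul_eq_mul, mul_comm]
      intro v hv
      rw [Finset.filter_filter]
      have hff : (D.filter fun e => e.2 ∈ B ∧ e.2 = v) = D.filter fun e => e.2 = v := by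
        ext e
        simp only [Finset.mem_filter]
        constructor
        · rintro ⟨h1, -, h2⟩
          exact ⟨h1, h2⟩
        · rintro ⟨h1, h2⟩
          exact ⟨h1, h2 ▸ hv, h2⟩
      rw [hff]
      exact hi v
    have hle := Finset.card_le_card hsub
    rw [hcount1, hcount2] at hle
    exact Nat.le_of_mul_le_mul_left hle (Nat.succ_pos m)
  obtain ⟨f, hfinj, hf⟩ := (Finset.all_card_le_biUnion_card_iff_existsInjective' t).mp hall
  have hfD : ∀ v, (v, f v) ∈ D := fun v => (htmem v (f v)).mp (hf v)
  have hfbij : Function.Bijective f := Finite.injective_iff_bijective.mp hfinj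
  set S : Finset (V × V) := univ.image (fun v => (v, f v)) with hS
  have hSmem : ∀ p q : V, (p, q) ∈ S ↔ q = f p := by
    intro p q
    constructor
    · intro h
      obtain ⟨w, -, hw⟩ := Finset.mem_image.mp h
      have hw1 : w = p := congrArg Prod.fst hw
      have hw2 : f w = q := congrArg Prod.snd hw
      rw [← hw2, hw1]
    · rintro rfl
      exact Finset.mem_image.mpr ⟨p, Finset.mem_univ p, rfl⟩
  have hSD : S ⊆ D := by
    rintro ⟨p, q⟩ he
    rw [hSmem] at he
    rw [he]
    exact hfD p
  have hSout : ∀ v, (S.filter fun e => e.1 = v) = {(v, f v)} := by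
    intro v
    ext ⟨p, q⟩
    simp only [Finset.mem_filter, Finset.mem_singleton, hSmem]
    constructor
    · rintro ⟨h1, rfl⟩
      rw [h1]
    · intro h
      have h1 : p = v := congrArg Prod.fst h
      have h2 : q = f v := congrArg Prod.snd h
      exact ⟨by rw [h1, h2], h1⟩
  have hSin : ∀ u, ∃ w, f w = u ∧ (S.filter fun e => e.2 = u) = {(w, u)} := by
    intro u
    obtain ⟨w, hw⟩ := hfbij.surjective u
    refine ⟨w, hw, ?_⟩
    ext ⟨p, q⟩
    simp only [Finset.mem_filter, Finset.mem_singleton, hSmem]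
    constructor
    · rintro ⟨h1, rfl⟩
      have hpw : p = w := hfinj (by rw [← h1, hw])
      rw [hpw]
    · intro h
      have h1 : p = w := congrArg Prod.fst h
      have h2 : q = u := congrArg Prod.snd h
      exact ⟨by rw [h1, h2, hw], h2⟩
  refine ⟨D \ S, Finset.sdiff_subset, ?_, ?_⟩
  · intro v
    unfold outd
    rw [filter_sdiff_eq, Finset.card_sdiff_of_subset ?_]
    · rw [hSout v, Finset.card_singleton]
      have := ho v
      unfold outd at this
      omega
    · rw [hSout v]
      intro e he
      rw [Finset.mem_singleton] at he
      rw [he]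
      exact Finset.mem_filter.mpr ⟨hfD v, rfl⟩
  · intro v
    obtain ⟨w, hw, hSv⟩ := hSin v
    unfold ind
    rw [filter_sdiff_eq, Finset.card_sdiff_of_subset ?_]
    · rw [hSv, Finset.card_singleton]
      have := hi v
      unfold ind at this
      omega
    · rw [hSv]
      intro e he
      rw [Finset.mem_singleton] at he
      rw [he]
      refine Finset.mem_filter.mpr ⟨?_, rfl⟩
      have := hfD w
      rwa [hw] at this

lemma reduceTo : ∀ (m j : ℕ), j ≤ m → ∀ D : Finset (V × V), (∀ v, outd D v = m) →
    (∀ v, ind D v = m) →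
    ∃ D' : Finset (V × V), D' ⊆ D ∧ (∀ v, outd D' v = j) ∧ (∀ v, ind D' v = j) := by
  intro m
  induction m with
  | zero =>
    intro j hj D ho hi
    obtain rfl : j = 0 := Nat.le_zero.mp hj
    exact ⟨D, subset_rfl, ho, hi⟩
  | succ n IH =>
    intro j hj D ho hi
    rcases Nat.lt_or_ge j (n+1) with hlt | hge
    · obtain ⟨D1, hD1, ho1, hi1⟩ := reduce n D ho hi
      obtain ⟨D', hD', ho', hi'⟩ := IH j (Nat.lt_succ_iff.mp hlt) D1 ho1 hi1
      exact ⟨D', hD'.trans hD1, ho', hi'⟩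
    · obtain rfl : j = n + 1 := le_antisymm hj hge
      exact ⟨D, subset_rfl, ho, hi⟩


end Stmt17

open SimpleGraph

/-- If a `(2k+1)`-regular graph `G` contains a perfect matching, then for every
`k' ≤ k`, `G` contains a spanning `2k'`-regular subgraph. -/
theorem stmt_17 {V : Type*} [Fintype V] (k : ℕ)
    (G : SimpleGraph V) (hreg : ∀ v : V, (G.neighborSet v).ncard = 2 * k + 1)
    (M : G.Subgraph) (hM : M.IsPerfectMatching) :
    ∀ k' ≤ k, ∃ H : SimpleGraph V, H ≤ G ∧ ∀ v : V, (H.neighborSet v).ncard = 2 * k' := by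
  classical
  intro k' hk'
  open Finset Stmt17 in
  have hMadj : ∀ v : V, ∃! w, M.Adj v w := SimpleGraph.Subgraph.isPerfectMatching_iff.mp hM
  set E : Finset (V × V) := Finset.univ.filter (fun e => G.Adj e.1 e.2 ∧ ¬ M.Adj e.1 e.2) with hE
  have hEmem : ∀ x y : V, (x,y) ∈ E ↔ G.Adj x y ∧ ¬ M.Adj x y := by
    intro x y; simp [hE]
  have hs : ∀ {x y : V}, (x,y) ∈ E → (y,x) ∈ E := by
    intro x y h
    rw [hEmem] at h ⊢
    exact ⟨h.1.symm, fun hm => h.2 hm.symm⟩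
  have hirr : ∀ x : V, (x,x) ∉ E := by
    intro x h
    rw [hEmem] at h
    exact G.loopless.irrefl x h.1
  have hdeg : ∀ v, #(Finset.univ.filter fun u => G.Adj v u) = 2 * k + 1 := by
    intro v
    have h := hreg v
    rw [Set.ncard_eq_toFinset_card'] at h
    rw [← h]
    congr 1
    ext u
    simp [Set.mem_toFinset]
  have houtE : ∀ v, Stmt17.outd E v = 2 * k := by
    intro v
    obtain ⟨w, hw, hwu⟩ := hMadj v
    have hset : (Finset.univ.filter fun u => (v, u) ∈ E) =
        (Finset.univ.filter fun u => G.Adj v u).erase w := by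
      ext u
      simp only [Finset.mem_filter, Finset.mem_univ, true_and, Finset.mem_erase, hEmem]
      constructor
      · rintro ⟨h1, h2⟩
        exact ⟨fun he => h2 (he ▸ hw), h1⟩
      · rintro ⟨h1, h2⟩
        exact ⟨h2, fun hm => h1 (hwu u hm)⟩
    rw [Stmt17.outd_eq, hset, Finset.card_erase_of_mem
      (by simp only [Finset.mem_filter, Finset.mem_univ, true_and]; exact hw.adj_sub), hdeg v]
    omega
  obtain ⟨D, hDE, hcover, hanti, hbal⟩ := Stmt17.orient (E.card) E le_rfl hs hirr
    (fun v => by rw [houtE]; exact even_two_mul k)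
  have houtD : ∀ v, Stmt17.outd D v = k := by
    intro v
    have hpart : E = D ∪ D.image Prod.swap := by
      ext ⟨x, y⟩
      rw [Finset.mem_union, Stmt17.mem_swap_image, hcover x y]
    have hdisj : Disjoint D (D.image Prod.swap) := by
      rw [Finset.disjoint_left]
      rintro ⟨x, y⟩ h1 h2
      exact hanti x y h1 (Stmt17.mem_swap_image.mp h2)
    have h1 : Stmt17.outd E v = Stmt17.outd D v + Stmt17.ind D v := by
      rw [hpart, Stmt17.outd_union hdisj, Stmt17.outd_swap]
    have h2 := houtE v
    have h3 := hbal v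
    omega
  have hindD : ∀ v, Stmt17.ind D v = k := fun v => by rw [← hbal v]; exact houtD v
  obtain ⟨D', hD'D, ho', hi'⟩ := Stmt17.reduceTo k k' hk' D houtD hindD
  have hD'E : D' ⊆ E := hD'D.trans hDE
  let H : SimpleGraph V :=
    { Adj := fun x y => (x,y) ∈ D' ∨ (y,x) ∈ D'
      symm := ⟨fun x y h => Or.symm h⟩
      loopless := ⟨fun x h => by
        rcases h with h | h <;> exact hirr x (hD'E h)⟩ }
  refine ⟨H, ?_, ?_⟩
  · intro x y hxy
    rcases hxy with h | h
    · exact ((hEmem x y).mp (hD'E h)).1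
    · exact (((hEmem y x).mp (hD'E h)).1).symm
  · intro v
    have hn : (H.neighborSet v).ncard = #(Finset.univ.filter fun u => H.Adj v u) := by
      rw [Set.ncard_eq_toFinset_card']
      congr 1
      ext u
      simp [Set.mem_toFinset]
    rw [hn]
    have hsplit : (Finset.univ.filter fun u => H.Adj v u) =
        (Finset.univ.filter fun u => (v, u) ∈ D') ∪ (Finset.univ.filter fun u => (u, v) ∈ D') := by
      ext u
      simp only [Finset.mem_union, Finset.mem_filter, Finset.mem_univ, true_and]
      exact Iff.rfl
    have hdisj2 : Disjoint (Finset.univ.filter fun u => (v, u) ∈ D')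
        (Finset.univ.filter fun u => (u, v) ∈ D') := by
      rw [Finset.disjoint_left]
      intro u h1 h2
      rw [Finset.mem_filter] at h1 h2
      exact hanti v u (hD'D h1.2) (hD'D h2.2)
    rw [hsplit, Finset.card_union_of_disjoint hdisj2, ← Stmt17.outd_eq, ← Stmt17.ind_eq,
      ho', hi']
    omega
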